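/- Let O be a valuation ring with maximal ideal m, fraction field K and residue field k = O/m. Let B = O[X₁,…,X_d] be the polynomial ring in d variables over O, and let p ⊆ B be the set of polynomials all of whose coefficients lie in m; equivalently, p is the kernel of the coefficientwise reduction map B → k[X₁,…,X_d]. Then p is a prime ideal of B, and the localization B_p of B at p is again a valuation ring. -/

import Mathlib

open MvPolynomial

/-- In a valuation ring, any nonempty finite set has an element dividing all elements. -/
lemma exists_dvd_all_finset {O : Type} [CommRing O] [IsDomain O] [ValuationRing O]
    (s : Finset O) (hs : s.Nonempty) : ∃ c ∈ s, ∀ x ∈ s, c ∣ x := by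
  classical
  induction s using Finset.induction_on with
  | empty => exact absurd hs (by simp)
  | @insert a s ha ih =>
    rcases s.eq_empty_or_nonempty with rfl | hsn
    · exact ⟨a, by simp⟩
    · obtain ⟨c, hcs, hc⟩ := ih hsn
      rcases ValuationRing.dvd_total c a with h | h
      · exact ⟨c, Finset.mem_insert_of_mem hcs, fun x hx => by
          rcases Finset.mem_insert.mp hx with rfl | hx
          · exact h
          · exact hc x hx⟩
      · exact ⟨a, Finset.mem_insert_self a s, fun x hx => by
          rcases Finset.mem_insert.mp hx with rfl | hx
          · exact dvd_rfl
          · exact h.trans (hc x hx)⟩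

/-- If `c ≠ 0` divides all coefficients of `h`, then `h = C c * h₁` for some `h₁`,
and if moreover `c` is a coefficient of `h`, the corresponding coefficient of `h₁` is `1`. -/
lemma exists_factor {O : Type} [CommRing O] [IsDomain O]
    {d : ℕ} (h : MvPolynomial (Fin d) O) (c : O)
    (hdvd : ∀ m : Fin d →₀ ℕ, c ∣ coeff m h) :
    ∃ h₁ : MvPolynomial (Fin d) O, h = C c * h₁ ∧
      ∀ m : Fin d →₀ ℕ, coeff m h = c * coeff m h₁ := by
  classical
  refine ⟨∑ m ∈ h.support, monomial m (Classical.choose (hdvd m)), ?_, ?_⟩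
  · conv_lhs => rw [← support_sum_monomial_coeff h]
    rw [Finset.mul_sum]
    refine Finset.sum_congr rfl fun m hm => ?_
    rw [C_mul_monomial, ← Classical.choose_spec (hdvd m)]
  · intro m
    rw [coeff_sum]
    by_cases hm : m ∈ h.support
    · rw [Finset.sum_eq_single m (fun b _ hb => by rw [coeff_monomial, if_neg hb])
        (fun h' => absurd hm h')]
      rw [coeff_monomial, if_pos rfl, ← Classical.choose_spec (hdvd m)]
    · rw [Finset.sum_eq_zero (fun b hb => by
        rw [coeff_monomial, if_neg]; rintro rfl; exact hm hb)]
      rw [notMem_support_iff.mp hm, mul_zero]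

/-- Key divisibility lemma in the localization. -/
lemma dvd_in_localization {O : Type} [CommRing O] [IsDomain O] [ValuationRing O]
    {d : ℕ} {p : Ideal (MvPolynomial (Fin d) O)}
    (hpdef : ∀ f : MvPolynomial (Fin d) O,
      f ∈ p ↔ ∀ m : Fin d →₀ ℕ, MvPolynomial.coeff m f ∈ IsLocalRing.maximalIdeal O)
    (hp : p.IsPrime)
    (f g : MvPolynomial (Fin d) O) (m₀ : Fin d →₀ ℕ) (hm₀ : coeff m₀ f ≠ 0)
    (hdf : ∀ m, coeff m₀ f ∣ coeff m f) (hdg : ∀ m, coeff m₀ f ∣ coeff m g) :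
    algebraMap (MvPolynomial (Fin d) O) (Localization.AtPrime p) f ∣
      algebraMap (MvPolynomial (Fin d) O) (Localization.AtPrime p) g := by
  classical
  set c := coeff m₀ f with hc
  obtain ⟨f₁, hf₁, hcf⟩ := exists_factor f c hdf
  obtain ⟨g₁, hg₁, _⟩ := exists_factor g c hdg
  -- coeff m₀ f₁ = 1
  have hone : coeff m₀ f₁ = 1 := by
    have := hcf m₀
    rw [← hc] at this
    have h2 : c * 1 = c * coeff m₀ f₁ := by rw [mul_one, ← this]
    exact (mul_left_cancel₀ hm₀ h2).symm
  -- f₁ ∉ p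
  have hf₁p : f₁ ∈ p.primeCompl := by
    intro hmem
    have := (hpdef f₁).mp hmem m₀
    rw [hone] at this
    exact (IsLocalRing.maximalIdeal.isMaximal O).ne_top (Ideal.eq_top_of_isUnit_mem _ this isUnit_one)
  -- f₁ is a unit in the localization
  have hunit : IsUnit (algebraMap (MvPolynomial (Fin d) O) (Localization.AtPrime p) f₁) :=
    IsLocalization.map_units (Localization.AtPrime p) (⟨f₁, hf₁p⟩ : p.primeCompl)
  obtain ⟨u, hu⟩ := hunit
  refine ⟨algebraMap _ _ g₁ * ↑u⁻¹, ?_⟩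
  have key : algebraMap (MvPolynomial (Fin d) O) (Localization.AtPrime p) f *
      (algebraMap _ _ g₁ * ↑u⁻¹) * ↑u =
      algebraMap (MvPolynomial (Fin d) O) (Localization.AtPrime p) g * ↑u := by
    rw [mul_assoc, mul_assoc, u.inv_mul, mul_one, hu, ← map_mul, ← map_mul]
    congr 1
    rw [hf₁, hg₁]; ring
  exact (u.isUnit.mul_right_cancel key).symm

theorem polynomial_localization_at_gauss_prime_is_valuationRing
    (O : Type) [CommRing O] [IsDomain O] [ValuationRing O]
    (d : ℕ) (p : Ideal (MvPolynomial (Fin d) O))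
    (hpdef : ∀ f : MvPolynomial (Fin d) O,
      f ∈ p ↔ ∀ m : Fin d →₀ ℕ, MvPolynomial.coeff m f ∈ IsLocalRing.maximalIdeal O) :
    ∃ (hp : p.IsPrime) (_ : IsDomain (Localization.AtPrime p)),
      ValuationRing (Localization.AtPrime p) := by
  classical
  -- p is the kernel of the reduction map, hence prime
  have hpker : p = RingHom.ker (MvPolynomial.map (IsLocalRing.residue O) :
      MvPolynomial (Fin d) O →+* MvPolynomial (Fin d) (IsLocalRing.ResidueField O)) := by
    ext f
    rw [hpdef, RingHom.mem_ker, MvPolynomial.eq_zero_iff]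
    constructor
    · intro h m
      rw [coeff_map]
      exact (IsLocalRing.residue_eq_zero_iff _).mpr (h m)
    · intro h m
      have := h m
      rw [coeff_map] at this
      exact (IsLocalRing.residue_eq_zero_iff _).mp this
  have hp : p.IsPrime := by
    rw [hpker]
    exact RingHom.ker_isPrime _
  haveI := hp
  haveI hdom : IsDomain (Localization.AtPrime p) :=
    IsLocalization.isDomain_localization p.primeCompl_le_nonZeroDivisors
  refine ⟨hp, hdom, ?_⟩
  set L := Localization.AtPrime p
  -- total divisibility on images of polynomials
  have hdvd : ∀ f g : MvPolynomial (Fin d) O,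
      algebraMap (MvPolynomial (Fin d) O) L f ∣ algebraMap (MvPolynomial (Fin d) O) L g ∨
      algebraMap (MvPolynomial (Fin d) O) L g ∣ algebraMap (MvPolynomial (Fin d) O) L f := by
    intro f g
    rcases eq_or_ne f 0 with rfl | hf
    · right; simp
    rcases eq_or_ne g 0 with rfl | hg
    · left; simp
    set S : Finset O := f.support.image (fun m => coeff m f) ∪
        g.support.image (fun m => coeff m g) with hS
    have hSne : S.Nonempty := by
      obtain ⟨m, hm⟩ := support_nonempty.mpr hf
      exact ⟨coeff m f, Finset.mem_union_left _ (Finset.mem_image_of_mem _ hm)⟩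
    obtain ⟨c, hcS, hc⟩ := exists_dvd_all_finset S hSne
    have hcdvdf : ∀ m, c ∣ coeff m f := by
      intro m
      by_cases hm : m ∈ f.support
      · exact hc _ (Finset.mem_union_left _ (Finset.mem_image_of_mem _ hm))
      · rw [notMem_support_iff.mp hm]; exact dvd_zero c
    have hcdvdg : ∀ m, c ∣ coeff m g := by
      intro m
      by_cases hm : m ∈ g.support
      · exact hc _ (Finset.mem_union_right _ (Finset.mem_image_of_mem _ hm))
      · rw [notMem_support_iff.mp hm]; exact dvd_zero c
    rcases Finset.mem_union.mp hcS with hcf | hcg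
    · obtain ⟨m₀, hm₀, rfl⟩ := Finset.mem_image.mp hcf
      exact Or.inl (dvd_in_localization hpdef hp f g m₀
        (mem_support_iff.mp hm₀) hcdvdf hcdvdg)
    · obtain ⟨m₀, hm₀, rfl⟩ := Finset.mem_image.mp hcg
      exact Or.inr (dvd_in_localization hpdef hp g f m₀
        (mem_support_iff.mp hm₀) hcdvdg hcdvdf)
  -- now prove the valuation ring condition
  rw [ValuationRing.iff_dvd_total]
  constructor
  intro a b
  obtain ⟨⟨f, s⟩, rfl⟩ := IsLocalization.mk'_surjective p.primeCompl a
  obtain ⟨⟨g, t⟩, rfl⟩ := IsLocalization.mk'_surjective p.primeCompl b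
  have hs : IsUnit (algebraMap (MvPolynomial (Fin d) O) L (s : MvPolynomial (Fin d) O)) :=
    IsLocalization.map_units L s
  have ht : IsUnit (algebraMap (MvPolynomial (Fin d) O) L (t : MvPolynomial (Fin d) O)) :=
    IsLocalization.map_units L t
  obtain ⟨us, hus⟩ := hs
  obtain ⟨ut, hut⟩ := ht
  have ha : IsLocalization.mk' L f s * ↑us = algebraMap (MvPolynomial (Fin d) O) L f := by
    rw [hus]; exact IsLocalization.mk'_spec L f s
  have hb : IsLocalization.mk' L g t * ↑ut = algebraMap (MvPolynomial (Fin d) O) L g := by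
    rw [hut]; exact IsLocalization.mk'_spec L g t
  rcases hdvd f g with ⟨h, hh⟩ | ⟨h, hh⟩
  · refine Or.inl ⟨↑us * h * ↑ut⁻¹, ?_⟩
    have key : IsLocalization.mk' L f s * (↑us * h * ↑ut⁻¹) * ↑ut =
        IsLocalization.mk' L g t * ↑ut := by
      calc IsLocalization.mk' L f s * (↑us * h * ↑ut⁻¹) * ↑ut
          = (IsLocalization.mk' L f s * ↑us) * h * (↑ut⁻¹ * ↑ut) := by ring
        _ = algebraMap (MvPolynomial (Fin d) O) L f * h := by
            rw [ha, ut.inv_mul, mul_one]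
        _ = algebraMap (MvPolynomial (Fin d) O) L g := hh.symm
        _ = IsLocalization.mk' L g t * ↑ut := hb.symm
    exact (ut.isUnit.mul_right_cancel key).symm
  · refine Or.inr ⟨↑ut * h * ↑us⁻¹, ?_⟩
    have key : IsLocalization.mk' L g t * (↑ut * h * ↑us⁻¹) * ↑us =
        IsLocalization.mk' L f s * ↑us := by
      calc IsLocalization.mk' L g t * (↑ut * h * ↑us⁻¹) * ↑us
          = (IsLocalization.mk' L g t * ↑ut) * h * (↑us⁻¹ * ↑us) := by ring
        _ = algebraMap (MvPolynomial (Fin d) O) L g * h := by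
            rw [hb, us.inv_mul, mul_one]
        _ = algebraMap (MvPolynomial (Fin d) O) L f := hh.symm
        _ = IsLocalization.mk' L f s * ↑us := ha.symm
    exact (us.isUnit.mul_right_cancel key).symm
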